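/- Let k be a field of characteristic 0 with algebraic closure K, and let f, g, h ∈ k[x] with f separable and g, h relatively prime. Suppose there are two distinct roots α ≠ β of f in K and elements s, t ∈ K, not both zero, such that s·g(α) + t·h(α) = 0 and s·g(β) + t·h(β) = 0. Then there exist elements a, b lying in the intersection of the subfields k(α) and k(β) of K, not both zero, such that α and β are both roots of the polynomial p = a·g + b·h; in particular p has all its coefficients in the subfield k(α) ∩ k(β) of K. -/

import Mathlib

open Polynomial IntermediateField

lemma aux_coeff_mem {k K : Type*} [Field k] [Field K] [Algebra k K]
    (S : IntermediateField k K) (a b : K) (ha : a ∈ S) (hb : b ∈ S)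
    (g h : Polynomial k) (n : ℕ) :
    (C a * g.map (algebraMap k K) + C b * h.map (algebraMap k K)).coeff n ∈ S := by
  simp only [coeff_add, coeff_C_mul, coeff_map]
  exact add_mem (mul_mem ha (S.algebraMap_mem _)) (mul_mem hb (S.algebraMap_mem _))

lemma aux_eval {k K : Type*} [Field k] [Field K] [Algebra k K]
    (a b : K) (g h : Polynomial k) (x : K) :
    Polynomial.eval x (C a * g.map (algebraMap k K) + C b * h.map (algebraMap k K))
      = a * Polynomial.aeval x g + b * Polynomial.aeval x h := by
  simp [eval_map, aeval_def]

lemma aux_aeval_mem {k K : Type*} [Field k] [Field K] [Algebra k K]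
    (g : Polynomial k) (x : K) : Polynomial.aeval x g ∈ k⟮x⟯ := by
  have : x ∈ k⟮x⟯ := IntermediateField.mem_adjoin_simple_self k x
  exact (k⟮x⟯ : IntermediateField k K).toSubalgebra.aeval_coe ⟨x, this⟩ g ▸
    Subtype.property _

theorem common_pencil_member_coeffs_in_intersection
    {k K : Type*} [Field k] [Field K] [CharZero k] [Algebra k K]
    [IsAlgClosure k K]
    (f g h : Polynomial k) (hf : f.Separable) (hgh : IsCoprime g h)
    (α β : K) (hαβ : α ≠ β)
    (hα : Polynomial.aeval α f = 0) (hβ : Polynomial.aeval β f = 0)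
    (s t : K) (hst : ¬(s = 0 ∧ t = 0))
    (hsα : s * Polynomial.aeval α g + t * Polynomial.aeval α h = 0)
    (hsβ : s * Polynomial.aeval β g + t * Polynomial.aeval β h = 0) :
    ∃ a b : K, ¬(a = 0 ∧ b = 0) ∧
      a ∈ (k⟮α⟯ ⊓ k⟮β⟯ : IntermediateField k K) ∧
      b ∈ (k⟮α⟯ ⊓ k⟮β⟯ : IntermediateField k K) ∧
      (Polynomial.eval α (C a * g.map (algebraMap k K)
          + C b * h.map (algebraMap k K)) = 0) ∧
      (Polynomial.eval β (C a * g.map (algebraMap k K)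
          + C b * h.map (algebraMap k K)) = 0) ∧
      ∀ n : ℕ, (C a * g.map (algebraMap k K)
          + C b * h.map (algebraMap k K)).coeff n
            ∈ (k⟮α⟯ ⊓ k⟮β⟯ : IntermediateField k K) := by
  set S : IntermediateField k K := k⟮α⟯ ⊓ k⟮β⟯ with hS
  have hcop : ∀ x : K, ¬(Polynomial.aeval x g = 0 ∧ Polynomial.aeval x h = 0) := by
    rintro x ⟨h1, h2⟩
    obtain ⟨u, v, huv⟩ := hgh
    have := congrArg (Polynomial.aeval x) huv
    simp [h1, h2] at this
  by_cases hgα : Polynomial.aeval α g = 0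
  · have hhα : Polynomial.aeval α h ≠ 0 := fun hz => hcop α ⟨hgα, hz⟩
    have ht : t = 0 := by
      have e : t * Polynomial.aeval α h = 0 := by linear_combination hsα - s * hgα
      exact (mul_eq_zero.mp e).resolve_right hhα
    have hs : s ≠ 0 := fun hz => hst ⟨hz, ht⟩
    have hgβ : Polynomial.aeval β g = 0 := by
      have e : s * Polynomial.aeval β g = 0 := by
        linear_combination hsβ - Polynomial.aeval β h * ht
      exact (mul_eq_zero.mp e).resolve_left hs
    refine ⟨1, 0, by simp, one_mem S, zero_mem S, ?_, ?_,
      fun n => aux_coeff_mem S 1 0 (one_mem S) (zero_mem S) g h n⟩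
    · rw [aux_eval]; simp [hgα]
    · rw [aux_eval]; simp [hgβ]
  · by_cases hhα : Polynomial.aeval α h = 0
    · have hs : s = 0 := by
        have e : s * Polynomial.aeval α g = 0 := by linear_combination hsα - t * hhα
        exact (mul_eq_zero.mp e).resolve_right hgα
      have ht : t ≠ 0 := fun hz => hst ⟨hs, hz⟩
      have hhβ : Polynomial.aeval β h = 0 := by
        have e : t * Polynomial.aeval β h = 0 := by
          linear_combination hsβ - Polynomial.aeval β g * hs
        exact (mul_eq_zero.mp e).resolve_left ht
      refine ⟨0, 1, by simp, zero_mem S, one_mem S, ?_, ?_,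
        fun n => aux_coeff_mem S 0 1 (zero_mem S) (one_mem S) g h n⟩
      · rw [aux_eval]; simp [hhα]
      · rw [aux_eval]; simp [hhβ]
    · have hs : s ≠ 0 := by
        intro hz
        have e : t * Polynomial.aeval α h = 0 := by
          linear_combination hsα - Polynomial.aeval α g * hz
        exact hst ⟨hz, (mul_eq_zero.mp e).resolve_right hhα⟩
      have ht : t ≠ 0 := by
        intro hz
        have e : s * Polynomial.aeval α g = 0 := by
          linear_combination hsα - Polynomial.aeval α h * hz
        exact hs ((mul_eq_zero.mp e).resolve_right hgα)
      have hhβ : Polynomial.aeval β h ≠ 0 := by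
        intro hz
        have e : s * Polynomial.aeval β g = 0 := by linear_combination hsβ - t * hz
        rcases mul_eq_zero.mp e with h1 | h1
        · exact hs h1
        · exact hcop β ⟨h1, hz⟩
      have hgβ : Polynomial.aeval β g ≠ 0 := by
        intro hz
        have e : t * Polynomial.aeval β h = 0 := by linear_combination hsβ - s * hz
        exact hhβ ((mul_eq_zero.mp e).resolve_left ht)
      have key : Polynomial.aeval α g * Polynomial.aeval β h
          = Polynomial.aeval β g * Polynomial.aeval α h := by
        have hc : s * (Polynomial.aeval α g * Polynomial.aeval β h)
            = s * (Polynomial.aeval β g * Polynomial.aeval α h) := by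
          linear_combination Polynomial.aeval β h * hsα - Polynomial.aeval α h * hsβ
        exact mul_left_cancel₀ hs hc
      set b : K := -(Polynomial.aeval α g) * (Polynomial.aeval α h)⁻¹ with hb
      have hbeq : b = -(Polynomial.aeval β g) * (Polynomial.aeval β h)⁻¹ := by
        rw [hb]
        field_simp
        linear_combination -key
      have hbα : b ∈ (k⟮α⟯ : IntermediateField k K) :=
        mul_mem (neg_mem (aux_aeval_mem g α)) (inv_mem (aux_aeval_mem h α))
      have hbβ : b ∈ (k⟮β⟯ : IntermediateField k K) := by
        rw [hbeq]
        exact mul_mem (neg_mem (aux_aeval_mem g β)) (inv_mem (aux_aeval_mem h β))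
      refine ⟨1, b, by simp, one_mem S, ⟨hbα, hbβ⟩, ?_, ?_,
        fun n => aux_coeff_mem S 1 b (one_mem S) ⟨hbα, hbβ⟩ g h n⟩
      · rw [aux_eval, hb]; field_simp; ring
      · rw [aux_eval, hbeq]; field_simp; ring
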